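/- Let R be a commutative ring and M an R-module. Then M is finitely presented if and only if there exist R-modules V₁ and V₂, an R-linear map u: V₂ → V₁, and an element t ∈ V₂ ⊗_R M such that for every commutative R-algebra S the sequence Hom_S(V₁ ⊗_R S, S) → Hom_S(V₂ ⊗_R S, S) → M ⊗_R S → 0 is exact, where the first map is precomposition with u ⊗ id_S and the second map is contraction against t (if t = Σ_k v_k ⊗ m_k it sends w to Σ_k w(v_k ⊗ 1)·(m_k ⊗ 1)). -/

import Mathlib

open TensorProduct

universe u

/-- Contraction against `t ∈ V₂ ⊗_R M`: it sends an `S`-linear form `w` on `V₂ ⊗_R S` to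
`Σ_k w(v_k ⊗ 1)·(m_k ⊗ 1) ∈ M ⊗_R S`, where `t = Σ_k v_k ⊗ m_k`. -/
noncomputable def contractAgainst (R V₂ M : Type u) [CommRing R]
    [AddCommGroup V₂] [Module R V₂] [AddCommGroup M] [Module R M]
    (t : V₂ ⊗[R] M) (S : Type u) [CommRing S] [Algebra R S]
    (w : (S ⊗[R] V₂) →ₗ[S] S) : S ⊗[R] M :=
  LinearMap.rTensor M ((w.restrictScalars R) ∘ₗ TensorProduct.mk R S V₂ 1) t

/-- The "dual exactness" property at an `R`-module `Q`. -/
def DualSeqExact {R : Type u} [CommRing R] {V₁ V₂ M : Type u}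
    [AddCommGroup V₁] [Module R V₁] [AddCommGroup V₂] [Module R V₂]
    [AddCommGroup M] [Module R M]
    (u : V₂ →ₗ[R] V₁) (t : V₂ ⊗[R] M) (Q : Type u)
    [AddCommGroup Q] [Module R Q] : Prop :=
  (∀ φ : V₂ →ₗ[R] Q, LinearMap.rTensor M φ t = 0 ↔ ∃ a : V₁ →ₗ[R] Q, φ = a ∘ₗ u) ∧
  Function.Surjective (fun φ : V₂ →ₗ[R] Q => LinearMap.rTensor M φ t)


section Bridge

variable {R : Type u} [CommRing R] {V₁ V₂ M : Type u}
  [AddCommGroup V₁] [Module R V₁] [AddCommGroup V₂] [Module R V₂]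
  [AddCommGroup M] [Module R M]

variable (u : V₂ →ₗ[R] V₁) (t : V₂ ⊗[R] M)
variable (S : Type u) [CommRing S] [Algebra R S]

lemma contractAgainst_eq (w : (S ⊗[R] V₂) →ₗ[S] S) :
    contractAgainst R V₂ M t S w
      = LinearMap.rTensor M ((LinearMap.liftBaseChangeEquiv S).symm w) t := by
  rfl

lemma symm_comp_baseChange (w' : (S ⊗[R] V₁) →ₗ[S] S) :
    (LinearMap.liftBaseChangeEquiv S).symm (w' ∘ₗ u.baseChange S)
      = ((LinearMap.liftBaseChangeEquiv S).symm w') ∘ₗ u := by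
  ext v
  simp

lemma bridge :
    ((∀ w : (S ⊗[R] V₂) →ₗ[S] S,
        contractAgainst R V₂ M t S w = 0 ↔
          w ∈ Set.range (fun w' : (S ⊗[R] V₁) →ₗ[S] S => w' ∘ₗ u.baseChange S)) ∧
      Function.Surjective (fun w : (S ⊗[R] V₂) →ₗ[S] S => contractAgainst R V₂ M t S w))
    ↔ DualSeqExact u t S := by
  have hrange : ∀ w : (S ⊗[R] V₂) →ₗ[S] S,
      (w ∈ Set.range (fun w' : (S ⊗[R] V₁) →ₗ[S] S => w' ∘ₗ u.baseChange S)) ↔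
        ∃ a : V₁ →ₗ[R] S,
          (LinearMap.liftBaseChangeEquiv S).symm w = a ∘ₗ u := by
    intro w
    constructor
    · rintro ⟨w', rfl⟩
      exact ⟨(LinearMap.liftBaseChangeEquiv S).symm w', symm_comp_baseChange u S w'⟩
    · rintro ⟨a, ha⟩
      refine ⟨LinearMap.liftBaseChangeEquiv S a, ?_⟩
      apply (LinearMap.liftBaseChangeEquiv S).symm.injective
      rw [symm_comp_baseChange, LinearEquiv.symm_apply_apply, ha]
  constructor
  · rintro ⟨hk, hs⟩
    constructor
    · intro φ
      have h1 := hk (LinearMap.liftBaseChangeEquiv S φ)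
      rw [contractAgainst_eq, LinearEquiv.symm_apply_apply,
        hrange, LinearEquiv.symm_apply_apply] at h1
      exact h1
    · intro x
      obtain ⟨w, hw⟩ := hs x
      refine ⟨(LinearMap.liftBaseChangeEquiv S).symm w, ?_⟩
      show LinearMap.rTensor M ((LinearMap.liftBaseChangeEquiv S).symm w) t = x
      rw [← contractAgainst_eq]; exact hw
  · rintro ⟨hk, hs⟩
    constructor
    · intro w
      rw [contractAgainst_eq, hk, hrange]
    · intro x
      obtain ⟨φ, hφ⟩ := hs x
      refine ⟨LinearMap.liftBaseChangeEquiv S φ, ?_⟩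
      show contractAgainst R V₂ M t S (LinearMap.liftBaseChangeEquiv S φ) = x
      rw [contractAgainst_eq, LinearEquiv.symm_apply_apply]
      exact hφ

end Bridge

section Coev

variable {R : Type u} [CommRing R] {Q : Type u} [AddCommGroup Q] [Module R Q]
variable {ι : Type} [Fintype ι] [DecidableEq ι]

/-- Coevaluation: `φ ↦ ∑ⱼ φ(eⱼ) ⊗ eⱼ`. -/
noncomputable def coev (φ : (ι → R) →ₗ[R] Q) : Q ⊗[R] (ι → R) :=
  ∑ j, φ (Pi.single j 1) ⊗ₜ[R] Pi.single j 1

lemma coev_eval (φ : (ι → R) →ₗ[R] Q) (j : ι) :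
    TensorProduct.rid R Q (LinearMap.lTensor Q (LinearMap.proj j) (coev φ))
      = φ (Pi.single j 1) := by
  simp only [coev, map_sum, LinearMap.lTensor_tmul, LinearMap.proj_apply, rid_tmul,
    Pi.single_apply]
  simp only [ite_smul, one_smul, zero_smul]
  rw [Finset.sum_ite_eq Finset.univ j (fun k => φ (Pi.single k 1))]
  simp

lemma coev_injective : Function.Injective (coev (R := R) (Q := Q) (ι := ι)) := by
  intro φ ψ h
  apply Module.Basis.ext (Pi.basisFun R ι)
  intro j
  have := congrArg (fun z => TensorProduct.rid R Q (LinearMap.lTensor Q (LinearMap.proj j) z)) h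
  simpa [coev_eval] using this

lemma coev_add (φ ψ : (ι → R) →ₗ[R] Q) : coev (φ + ψ) = coev φ + coev ψ := by
  simp [coev, add_tmul, Finset.sum_add_distrib]

lemma coev_surjective : Function.Surjective (coev (R := R) (Q := Q) (ι := ι)) := by
  intro y
  induction y using TensorProduct.induction_on with
  | zero =>
    refine ⟨0, ?_⟩
    simp [coev]
  | tmul q v =>
    refine ⟨Fintype.linearCombination R (fun j => v j • q), ?_⟩
    simp only [coev, Fintype.linearCombination_apply_single, one_smul]
    simp only [smul_tmul, ← tmul_sum]
    congr 1
    simp only [← Pi.single_smul, smul_eq_mul, mul_one]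
    exact Finset.univ_sum_single v
  | add x y hx hy =>
    obtain ⟨φ, rfl⟩ := hx
    obtain ⟨ψ, rfl⟩ := hy
    exact ⟨φ + ψ, coev_add φ ψ⟩

end Coev

section Misc
variable {R : Type u} [CommRing R] {ι : Type} [Fintype ι] [DecidableEq ι]

lemma eq_sum_single (x : ι → R) : x = ∑ j, x j • (Pi.single j 1 : ι → R) := by
  simp only [← Pi.single_smul, smul_eq_mul, mul_one]
  exact (Finset.univ_sum_single x).symm

end Misc

theorem exists_dualSeqExact (R M : Type u) [CommRing R] [AddCommGroup M] [Module R M]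
    [Module.FinitePresentation R M] :
    ∃ (V₁ : Type u) (_ : AddCommGroup V₁) (_ : Module R V₁)
      (V₂ : Type u) (_ : AddCommGroup V₂) (_ : Module R V₂)
      (u : V₂ →ₗ[R] V₁) (t : V₂ ⊗[R] M),
      ∀ (Q : Type u) (_ : AddCommGroup Q) (_ : Module R Q), DualSeqExact u t Q := by
  classical
  obtain ⟨n, π, hπ⟩ := Module.Finite.exists_fin' R M
  have hK : (LinearMap.ker π).FG := Module.FinitePresentation.fg_ker π hπ
  obtain ⟨m, κ, hκ⟩ := Submodule.fg_iff_exists_fin_generating_family.mp hK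
  set f : (Fin m → R) →ₗ[R] (Fin n → R) := Fintype.linearCombination R κ with hf
  have hexact : Function.Exact f π := by
    rw [LinearMap.exact_iff, hf, Fintype.range_linearCombination, hκ]
  set u : (Fin n → R) →ₗ[R] (Fin m → R) :=
    LinearMap.pi (fun a => Fintype.linearCombination R (κ a)) with hu
  set t : (Fin n → R) ⊗[R] M := ∑ j, Pi.single j 1 ⊗ₜ[R] π (Pi.single j 1) with ht
  refine ⟨Fin m → R, inferInstance, inferInstance, Fin n → R, inferInstance, inferInstance,
    u, t, ?_⟩
  intro Q _ _
  have c1 : ∀ φ : (Fin n → R) →ₗ[R] Q,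
      LinearMap.rTensor M φ t = LinearMap.lTensor Q π (coev φ) := by
    intro φ
    rw [ht]
    simp [coev, map_sum]
  have hfe : ∀ α, f (Pi.single α 1) = κ α := by
    intro α; simp [hf]
  have hue : ∀ j, u (Pi.single j 1) = fun α => κ α j := by
    intro j; ext α; simp [hu]
  have c5 : ∀ a : (Fin m → R) →ₗ[R] Q,
      coev (a ∘ₗ u) = LinearMap.lTensor Q f (coev a) := by
    intro a
    simp only [coev, map_sum, LinearMap.lTensor_tmul, LinearMap.comp_apply, hfe, hue]
    have h1 : ∀ j : Fin n, (fun α => κ α j) = ∑ α, κ α j • (Pi.single α 1 : Fin m → R) := by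
      intro j; exact eq_sum_single _
    have h2 : ∀ α : Fin m, κ α = ∑ j, κ α j • (Pi.single j 1 : Fin n → R) := fun α => eq_sum_single _
    calc ∑ j, a (fun α => κ α j) ⊗ₜ[R] Pi.single j (1:R)
        = ∑ j, ∑ α, (κ α j) • (a (Pi.single α 1) ⊗ₜ[R] Pi.single j (1:R)) := by
          refine Finset.sum_congr rfl fun j _ => ?_
          rw [h1 j, map_sum, sum_tmul]
          refine Finset.sum_congr rfl fun α _ => ?_
          rw [map_smul, smul_tmul']
      _ = ∑ α, a (Pi.single α 1) ⊗ₜ[R] κ α := by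
          rw [Finset.sum_comm]
          refine Finset.sum_congr rfl fun α _ => ?_
          simp_rw [← tmul_smul]
          rw [← tmul_sum]
          exact congrArg _ (eq_sum_single (κ α)).symm
  constructor
  · intro φ
    rw [c1]
    constructor
    · intro h
      obtain ⟨y, hy⟩ := (lTensor_exact Q hexact hπ (coev φ)).mp h
      obtain ⟨a, rfl⟩ := coev_surjective y
      exact ⟨a, (coev_injective (show coev φ = coev (a ∘ₗ u) by rw [c5]; exact hy.symm))⟩
    · rintro ⟨a, rfl⟩
      rw [c5]
      exact (lTensor_exact Q hexact hπ).apply_apply_eq_zero (coev a)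
  · intro x
    obtain ⟨y, hy⟩ := LinearMap.lTensor_surjective Q hπ x
    obtain ⟨φ, rfl⟩ := coev_surjective y
    exact ⟨φ, by show LinearMap.rTensor M φ t = x; rw [c1]; exact hy⟩

section Misc
variable {R : Type u} [CommRing R] {ι : Type u} [Fintype ι] [DecidableEq ι]

lemma eq_sum_single' (x : ι → R) : x = ∑ j, x j • (Pi.single j 1 : ι → R) := by
  simp only [← Pi.single_smul, smul_eq_mul, mul_one]
  exact (Finset.univ_sum_single x).symm

end Misc

theorem fp_of_dualSeqExact (R M : Type u) [CommRing R] [AddCommGroup M] [Module R M]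
    {V₁ V₂ : Type u} [AddCommGroup V₁] [Module R V₁] [AddCommGroup V₂] [Module R V₂]
    (u : V₂ →ₗ[R] V₁) (t : V₂ ⊗[R] M)
    (hP : ∀ (S : Type u) [CommRing S] [Algebra R S], DualSeqExact u t S) :
    Module.FinitePresentation R M := by
  classical
  obtain ⟨s, hs⟩ := TensorProduct.exists_finset t
  set π : (↥s → R) →ₗ[R] M :=
    Fintype.linearCombination R (fun i : ↥s => (i : V₂ × M).2) with hπdef
  have key : ∀ (Q : Type u) (_ : AddCommGroup Q) (_ : Module R Q) (φ : V₂ →ₗ[R] Q),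
      LinearMap.rTensor M φ t = ∑ i : ↥s, φ (i : V₂ × M).1 ⊗ₜ[R] (i : V₂ × M).2 := by
    intro Q _ _ φ
    rw [hs, ← Finset.sum_attach s (fun i => i.1 ⊗ₜ[R] i.2), map_sum]
    simp
  have tmulpi : ∀ (c : ↥s → R),
      (∑ i : ↥s, c i ⊗ₜ[R] (i : V₂ × M).2 : R ⊗[R] M) = 1 ⊗ₜ[R] π c := by
    intro c
    conv_rhs => rw [eq_sum_single' c]
    rw [hπdef, map_sum, tmul_sum]
    refine Finset.sum_congr rfl fun i _ => ?_
    rw [map_smul, Fintype.linearCombination_apply_single, one_smul, tmul_smul, smul_tmul',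
      smul_eq_mul, mul_one]
  have hπ : Function.Surjective π := by
    intro x
    obtain ⟨φ, hφ⟩ := (hP R).2 ((TensorProduct.lid R M).symm x)
    have hkey : LinearMap.rTensor M φ t = 1 ⊗ₜ[R] π (fun i => φ (i : V₂ × M).1) := by
      rw [key R inferInstance inferInstance φ]
      exact tmulpi _
    refine ⟨fun i => φ (i : V₂ × M).1, ?_⟩
    apply (TensorProduct.lid R M).symm.injective
    rw [TensorProduct.lid_symm_apply, ← hkey]
    exact hφ
  set K : Submodule R (↥s → R) := LinearMap.ker π with hKdef
  -- the big product algebra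
  have injB : ∀ x : (↥K → R) ⊗[R] M,
      (∀ κ : ↥K, LinearMap.rTensor M (LinearMap.proj κ : (↥K → R) →ₗ[R] R) x = 0) → x = 0 := by
    intro x hx
    obtain ⟨φ, rfl⟩ := (hP (↥K → R)).2 x
    have hcomp : ∀ κ : ↥K,
        LinearMap.rTensor M ((LinearMap.proj κ : (↥K → R) →ₗ[R] R) ∘ₗ φ) t = 0 := by
      intro κ
      rw [LinearMap.rTensor_comp, LinearMap.comp_apply]
      exact hx κ
    choose a ha using fun κ : ↥K => ((hP R).1 _).mp (hcomp κ)
    have hφ : φ = (LinearMap.pi a) ∘ₗ u := by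
      ext v κ
      have := congrArg (fun g : V₂ →ₗ[R] R => g v) (ha κ)
      simpa using this
    show LinearMap.rTensor M φ t = 0
    rw [hφ]
    exact ((hP (↥K → R)).1 _).mpr ⟨LinearMap.pi a, rfl⟩
  set ζ : (↥K → R) ⊗[R] (↥s → R) :=
    ∑ j : ↥s, (fun κ : ↥K => (κ : ↥s → R) j) ⊗ₜ[R] (Pi.single j 1 : ↥s → R) with hζdef
  have hζ0 : LinearMap.lTensor (↥K → R) π ζ = 0 := by
    apply injB
    intro κ
    have h1 : LinearMap.rTensor M (LinearMap.proj κ : (↥K → R) →ₗ[R] R)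
        (LinearMap.lTensor (↥K → R) π ζ)
        = ∑ j : ↥s, ((κ : ↥s → R) j) ⊗ₜ[R] π (Pi.single j 1) := by
      rw [hζdef, map_sum, map_sum]
      simp
    rw [h1]
    have h2 : ∀ j : ↥s, π (Pi.single j 1 : ↥s → R) = (j : V₂ × M).2 := by
      intro j
      rw [hπdef]
      simp
    calc (∑ j : ↥s, ((κ : ↥s → R) j) ⊗ₜ[R] π (Pi.single j 1) : R ⊗[R] M)
        = ∑ j : ↥s, ((κ : ↥s → R) j) ⊗ₜ[R] (j : V₂ × M).2 := by
          exact Finset.sum_congr rfl fun j _ => by rw [h2]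
      _ = 1 ⊗ₜ[R] π (κ : ↥s → R) := tmulpi _
      _ = 0 := by rw [LinearMap.mem_ker.mp κ.2, tmul_zero]
  have hex : Function.Exact (K.subtype) π := by
    rw [LinearMap.exact_iff, hKdef, Submodule.range_subtype]
  obtain ⟨η, hη⟩ := (lTensor_exact (↥K → R) hex hπ ζ).mp hζ0
  obtain ⟨s', hs'⟩ := TensorProduct.exists_finset η
  apply Module.finitePresentation_of_free_of_surjective π hπ
  refine ⟨s'.image (fun b => ((b.2 : ↥s → R))), ?_⟩
  apply le_antisymm
  · rw [Submodule.span_le]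
    intro y hy
    simp only [Finset.coe_image, Set.mem_image, Finset.mem_coe] at hy
    obtain ⟨b, _, rfl⟩ := hy
    exact b.2.2
  · intro κ hκ
    set F : (↥K → R) ⊗[R] (↥s → R) →ₗ[R] (↥s → R) :=
      (TensorProduct.lid R (↥s → R)).toLinearMap ∘ₗ
        LinearMap.rTensor (↥s → R) (LinearMap.proj (⟨κ, hκ⟩ : ↥K) : (↥K → R) →ₗ[R] R)
      with hFdef
    have hF1 : F ζ = κ := by
      rw [hζdef, hFdef, map_sum]
      simp only [LinearMap.comp_apply, LinearMap.rTensor_tmul, LinearMap.proj_apply,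
        LinearEquiv.coe_coe, lid_tmul]
      exact (eq_sum_single' κ).symm
    have hF2 : F (LinearMap.lTensor (↥K → R) (K.subtype) η)
        = ∑ b ∈ s', (b.1 (⟨κ, hκ⟩ : ↥K)) • ((b.2 : ↥s → R)) := by
      rw [hs', map_sum, map_sum, hFdef]
      simp
    have : κ = ∑ b ∈ s', (b.1 (⟨κ, hκ⟩ : ↥K)) • ((b.2 : ↥s → R)) := by
      rw [← hF2, hη]
      exact hF1.symm
    rw [this]
    refine Submodule.sum_mem _ fun b hb => ?_
    refine Submodule.smul_mem _ _ (Submodule.subset_span ?_)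
    simp only [Finset.coe_image, Set.mem_image, Finset.mem_coe]
    exact ⟨b, hb, rfl⟩

/-- `M` is a finitely presented `R`-module iff there exist `R`-modules `V₁, V₂`, a linear
map `u : V₂ → V₁` and an element `t ∈ V₂ ⊗_R M` such that
`Hom_S(V₁ ⊗_R S, S) → Hom_S(V₂ ⊗_R S, S) → M ⊗_R S → 0` is exact for every commutative
`R`-algebra `S`. -/
theorem finitePresentation_iff_dual_exact
    (R M : Type u) [CommRing R] [AddCommGroup M] [Module R M] :
    Module.FinitePresentation R M ↔
      ∃ (V₁ : Type u) (_ : AddCommGroup V₁) (_ : Module R V₁)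
        (V₂ : Type u) (_ : AddCommGroup V₂) (_ : Module R V₂)
        (u : V₂ →ₗ[R] V₁) (t : V₂ ⊗[R] M),
        ∀ (S : Type u) [CommRing S] [Algebra R S],
          (∀ w : (S ⊗[R] V₂) →ₗ[S] S,
            contractAgainst R V₂ M t S w = 0 ↔
              w ∈ Set.range (fun w' : (S ⊗[R] V₁) →ₗ[S] S => w' ∘ₗ u.baseChange S)) ∧
          Function.Surjective (fun w : (S ⊗[R] V₂) →ₗ[S] S => contractAgainst R V₂ M t S w) := by
  constructor
  · intro hfp
    obtain ⟨V₁, i1, i2, V₂, i3, i4, u, t, hQ⟩ := exists_dualSeqExact R M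
    exact ⟨V₁, i1, i2, V₂, i3, i4, u, t, fun S _ _ =>
      (bridge u t S).mpr (hQ S inferInstance inferInstance)⟩
  · rintro ⟨V₁, _, _, V₂, _, _, u, t, hS⟩
    exact fp_of_dualSeqExact R M u t (fun S _ _ => (bridge u t S).mp (hS S))
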